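/- Consider the one-dimensional ergodic MFG system with g(m) = m and V(x) = π cos(4πx). Let m(x) = (π cos(4πx))⁺ and let ũ, û : ℝ → ℝ be the 1-periodic Lipschitz functions with ũ(0) = û(0) = 0 whose a.e. derivatives are: ũ'(x) = √(2(−π cos(4πx))⁺) for x ∈ (1/8, 3/8), ũ'(x) = −√(2(−π cos(4πx))⁺) for x ∈ (5/8, 7/8), and ũ'(x) = 0 for all other x ∈ (0,1); û'(x) = √(2(−π cos(4πx))⁺) for x ∈ (1/8, 1/4) ∪ (5/8, 3/4), û'(x) = −√(2(−π cos(4πx))⁺) for x ∈ (1/4, 3/8) ∪ (3/4, 7/8), and û'(x) = 0 for all other x ∈ (0,1). Then: m ≥ 0 and ∫₀¹ m dx = 1; both ũ and û satisfy (1/2)(u'(x))² + π cos(4πx) = m(x) for a.e. x ∈ [0,1] and m(x) u'(x) = 0 for a.e. x ∈ [0,1]; and ũ − û is not a.e. equal to a constant. In particular, this ergodic MFG system (with H̄ = 0) admits two Lipschitz solutions that do not differ by a constant. -/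

import Mathlib

open MeasureTheory Set

/-- The density `m(x) = (π cos(4πx))⁺`. -/
noncomputable def mEx (x : ℝ) : ℝ := max (Real.pi * Real.cos (4 * Real.pi * x)) 0

/-- The speed `√(2(−π cos(4πx))⁺)`. -/
noncomputable def sEx (x : ℝ) : ℝ :=
  Real.sqrt (2 * max (-(Real.pi * Real.cos (4 * Real.pi * x))) 0)

/-- The a.e. derivative of `ũ` (prescribed on `(0,1)` and extended by periodicity). -/
noncomputable def Ftil (x : ℝ) : ℝ :=
  if 1 / 8 < Int.fract x ∧ Int.fract x < 3 / 8 then sEx x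
  else if 5 / 8 < Int.fract x ∧ Int.fract x < 7 / 8 then -sEx x
  else 0

/-- The a.e. derivative of `û` (prescribed on `(0,1)` and extended by periodicity). -/
noncomputable def Fhat (x : ℝ) : ℝ :=
  if (1 / 8 < Int.fract x ∧ Int.fract x < 1 / 4) ∨
      (5 / 8 < Int.fract x ∧ Int.fract x < 3 / 4) then sEx x
  else if (1 / 4 < Int.fract x ∧ Int.fract x < 3 / 8) ∨
      (3 / 4 < Int.fract x ∧ Int.fract x < 7 / 8) then -sEx x
  else 0

open intervalIntegral
set_option linter.unnecessarySeqFocus false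

lemma cos_fract (x : ℝ) : Real.cos (4 * Real.pi * x) = Real.cos (4 * Real.pi * Int.fract x) := by
  conv_lhs => rw [← Int.fract_add_floor x]
  rw [show 4 * Real.pi * (Int.fract x + (⌊x⌋ : ℝ)) =
      4 * Real.pi * Int.fract x + (2 * ⌊x⌋ : ℤ) * (2 * Real.pi) by push_cast; ring]
  exact Real.cos_add_int_mul_two_pi _ _

lemma cos_half (x : ℝ) : Real.cos (4 * Real.pi * (x + 1/2)) = Real.cos (4 * Real.pi * x) := by
  rw [show 4 * Real.pi * (x + 1/2) = 4 * Real.pi * x + 2 * Real.pi by ring]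
  exact Real.cos_add_two_pi _

lemma cos_refl (x : ℝ) : Real.cos (4 * Real.pi * (1/2 - x)) = Real.cos (4 * Real.pi * x) := by
  rw [show 4 * Real.pi * (1/2 - x) = (1:ℤ) * (2 * Real.pi) - 4 * Real.pi * x by push_cast; ring]
  exact Real.cos_int_mul_two_pi_sub _ _

lemma sEx_half (x : ℝ) : sEx (x + 1/2) = sEx x := by unfold sEx; rw [cos_half]
lemma sEx_refl (x : ℝ) : sEx (1/2 - x) = sEx x := by unfold sEx; rw [cos_refl]

lemma sEx_cont : Continuous sEx := by
  unfold sEx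
  exact Real.continuous_sqrt.comp (by continuity)

lemma sEx_nonneg (x : ℝ) : 0 ≤ sEx x := Real.sqrt_nonneg _

lemma sEx_bd (x : ℝ) : sEx x ≤ Real.sqrt (2 * Real.pi) := by
  apply Real.sqrt_le_sqrt
  have h1 : -(Real.pi * Real.cos (4 * Real.pi * x)) ≤ Real.pi := by
    nlinarith [Real.neg_one_le_cos (4 * Real.pi * x), Real.pi_pos]
  have := Real.pi_pos
  have h2 : (-(Real.pi * Real.cos (4 * Real.pi * x)) ⊔ 0) ≤ Real.pi := max_le h1 (le_of_lt this)
  linarith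


lemma cos_neg_mid {c : ℝ} (h1 : 1/8 < c) (h2 : c < 3/8) : Real.cos (4 * Real.pi * c) < 0 := by
  apply Real.cos_neg_of_pi_div_two_lt_of_lt <;> nlinarith [Real.pi_pos]

lemma cos_neg_mid2 {c : ℝ} (h1 : 5/8 < c) (h2 : c < 7/8) : Real.cos (4 * Real.pi * c) < 0 := by
  rw [show 4 * Real.pi * c = (4 * Real.pi * c - (1:ℤ) * (2*Real.pi)) + (1:ℤ) * (2*Real.pi) by ring,
    Real.cos_add_int_mul_two_pi]
  apply Real.cos_neg_of_pi_div_two_lt_of_lt <;> push_cast <;> nlinarith [Real.pi_pos]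

lemma cos_nonneg_out {c : ℝ} (h0 : 0 ≤ c) (h1 : c < 1)
    (ha : ¬(1/8 < c ∧ c < 3/8)) (hb : ¬(5/8 < c ∧ c < 7/8)) :
    0 ≤ Real.cos (4 * Real.pi * c) := by
  push_neg at ha hb
  rcases le_or_gt c (1/8) with h | h
  · apply Real.cos_nonneg_of_mem_Icc; constructor <;> nlinarith [Real.pi_pos]
  · have h38 : 3/8 ≤ c := ha h
    rcases le_or_gt c (5/8) with h' | h'
    · rw [show 4 * Real.pi * c = (4 * Real.pi * c - (1:ℤ) * (2*Real.pi)) + (1:ℤ) * (2*Real.pi) by ring,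
        Real.cos_add_int_mul_two_pi]
      apply Real.cos_nonneg_of_mem_Icc; constructor <;> push_cast <;> nlinarith [Real.pi_pos]
    · have h78 : 7/8 ≤ c := hb h'
      rw [show 4 * Real.pi * c = (4 * Real.pi * c - (2:ℤ) * (2*Real.pi)) + (2:ℤ) * (2*Real.pi) by ring,
        Real.cos_add_int_mul_two_pi]
      apply Real.cos_nonneg_of_mem_Icc; constructor <;> push_cast <;> nlinarith [Real.pi_pos]

lemma sEx_sq (x : ℝ) : sEx x ^ 2 = 2 * max (-(Real.pi * Real.cos (4 * Real.pi * x))) 0 :=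
  Real.sq_sqrt (by positivity)

lemma pde_of_neg {x : ℝ} (h : Real.cos (4 * Real.pi * Int.fract x) < 0) {v : ℝ}
    (hv : v = sEx x ∨ v = -sEx x) :
    (1/2) * v ^ 2 + Real.pi * Real.cos (4 * Real.pi * x) = mEx x ∧ mEx x * v = 0 := by
  have hc : Real.cos (4 * Real.pi * x) < 0 := by rw [cos_fract]; exact h
  have hm : mEx x = 0 := by
    unfold mEx; apply max_eq_right; nlinarith [Real.pi_pos]
  have hmax : max (-(Real.pi * Real.cos (4 * Real.pi * x))) 0
      = -(Real.pi * Real.cos (4 * Real.pi * x)) := by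
    apply max_eq_left; nlinarith [Real.pi_pos]
  have hv2 : v ^ 2 = sEx x ^ 2 := by rcases hv with h | h <;> rw [h] <;> ring
  rw [hm, hv2, sEx_sq, hmax]; constructor <;> ring

lemma pde_of_zero {x : ℝ} (h : 0 ≤ Real.cos (4 * Real.pi * Int.fract x)) :
    (1/2) * (0:ℝ) ^ 2 + Real.pi * Real.cos (4 * Real.pi * x) = mEx x ∧ mEx x * 0 = 0 := by
  have hc : 0 ≤ Real.cos (4 * Real.pi * x) := by rw [cos_fract]; exact h
  have hm : mEx x = Real.pi * Real.cos (4 * Real.pi * x) := by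
    apply max_eq_left; nlinarith [Real.pi_pos]
  rw [hm]; constructor <;> ring

lemma pde_til (x : ℝ) :
    (1/2) * Ftil x ^ 2 + Real.pi * Real.cos (4 * Real.pi * x) = mEx x ∧ mEx x * Ftil x = 0 := by
  have h0 := Int.fract_nonneg x
  have h1 := Int.fract_lt_one x
  unfold Ftil
  split_ifs with ha hb
  · exact pde_of_neg (cos_neg_mid ha.1 ha.2) (Or.inl rfl)
  · exact pde_of_neg (cos_neg_mid2 hb.1 hb.2) (Or.inr rfl)
  · exact pde_of_zero (cos_nonneg_out h0 h1 ha hb)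

lemma pde_hat (x : ℝ) (hq : Int.fract x ≠ 1/4) (hq' : Int.fract x ≠ 3/4) :
    (1/2) * Fhat x ^ 2 + Real.pi * Real.cos (4 * Real.pi * x) = mEx x ∧ mEx x * Fhat x = 0 := by
  have h0 := Int.fract_nonneg x
  have h1 := Int.fract_lt_one x
  unfold Fhat
  split_ifs with ha hb
  · rcases ha with h | h
    · exact pde_of_neg (cos_neg_mid h.1 (by linarith [h.2])) (Or.inl rfl)
    · exact pde_of_neg (cos_neg_mid2 h.1 (by linarith [h.2])) (Or.inl rfl)
  · rcases hb with h | h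
    · exact pde_of_neg (cos_neg_mid (by linarith [h.1]) h.2) (Or.inr rfl)
    · exact pde_of_neg (cos_neg_mid2 (by linarith [h.1]) h.2) (Or.inr rfl)
  · push_neg at ha hb
    apply pde_of_zero
    apply cos_nonneg_out h0 h1
    · rintro ⟨u1, u2⟩
      rcases lt_trichotomy (Int.fract x) (1/4) with h | h | h
      · linarith [ha.1 u1]
      · exact hq h
      · linarith [hb.1 h]
    · rintro ⟨u1, u2⟩
      rcases lt_trichotomy (Int.fract x) (3/4) with h | h | h
      · linarith [ha.2 u1]
      · exact hq' h
      · linarith [hb.2 h]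

lemma sEx_one (x : ℝ) : sEx (x + 1) = sEx x := by
  rw [show x + 1 = (x + 1/2) + 1/2 by ring, sEx_half, sEx_half]

lemma Ftil_meas : Measurable Ftil := by
  unfold Ftil
  refine Measurable.ite ?_ sEx_cont.measurable
    (Measurable.ite ?_ sEx_cont.measurable.neg measurable_const)
  · exact measurable_fract measurableSet_Ioo
  · exact measurable_fract measurableSet_Ioo

lemma Fhat_meas : Measurable Fhat := by
  unfold Fhat
  refine Measurable.ite ?_ sEx_cont.measurable
    (Measurable.ite ?_ sEx_cont.measurable.neg measurable_const)
  · exact (measurable_fract measurableSet_Ioo).union (measurable_fract measurableSet_Ioo)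
  · exact (measurable_fract measurableSet_Ioo).union (measurable_fract measurableSet_Ioo)

lemma Ftil_bd (x : ℝ) : ‖Ftil x‖ ≤ Real.sqrt (2 * Real.pi) := by
  have h1 := sEx_nonneg x; have h2 := sEx_bd x
  unfold Ftil; split_ifs
  · rw [Real.norm_eq_abs, abs_of_nonneg h1]; exact h2
  · rw [Real.norm_eq_abs, abs_neg, abs_of_nonneg h1]; exact h2
  · simp [Real.sqrt_nonneg]

lemma Fhat_bd (x : ℝ) : ‖Fhat x‖ ≤ Real.sqrt (2 * Real.pi) := by
  have h1 := sEx_nonneg x; have h2 := sEx_bd x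
  unfold Fhat; split_ifs
  · rw [Real.norm_eq_abs, abs_of_nonneg h1]; exact h2
  · rw [Real.norm_eq_abs, abs_neg, abs_of_nonneg h1]; exact h2
  · simp [Real.sqrt_nonneg]

lemma intInt {F : ℝ → ℝ} (hm : Measurable F)
    (hb : ∀ x, ‖F x‖ ≤ Real.sqrt (2 * Real.pi)) (a b : ℝ) :
    IntervalIntegrable F volume a b := by
  constructor <;>
    exact Measure.integrableOn_of_bounded (measure_Ioc_lt_top).ne
      hm.aestronglyMeasurable (Filter.Eventually.of_forall hb)

lemma Ftil_per : Function.Periodic Ftil 1 := by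
  intro x; unfold Ftil; rw [Int.fract_add_one, sEx_one]

lemma Fhat_per : Function.Periodic Fhat 1 := by
  intro x; unfold Fhat; rw [Int.fract_add_one, sEx_one]

lemma shift_half (a b : ℝ) :
    (∫ x in (a + 1/2)..(b + 1/2), sEx x) = ∫ x in a..b, sEx x := by
  rw [← integral_comp_add_right sEx (1/2)]
  simp only [sEx_half]

lemma refl_int : (∫ x in (1/4:ℝ)..(3/8), sEx x) = ∫ x in (1/8:ℝ)..(1/4), sEx x := by
  have h := integral_comp_sub_left (a := (1/8:ℝ)) (b := (1/4:ℝ)) sEx (1/2)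
  simp only [sEx_refl] at h
  rw [h]; norm_num

-- piecewise identities (closed intervals where possible)
lemma fract_eq {x : ℝ} (h0 : 0 ≤ x) (h1 : x < 1) : Int.fract x = x := Int.fract_eq_self.2 ⟨h0, h1⟩


lemma sEx_vanish {c : ℝ} (h : c = 1/8 ∨ c = 3/8 ∨ c = 5/8 ∨ c = 7/8) : sEx c = 0 := by
  have hc : Real.cos (4 * Real.pi * c) = 0 := by
    rcases h with h|h|h|h <;> subst h
    · rw [show 4*Real.pi*(1/8:ℝ) = Real.pi/2 by ring, Real.cos_pi_div_two]
    · rw [show 4*Real.pi*(3/8:ℝ) = Real.pi/2 + Real.pi by ring, Real.cos_add_pi,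
        Real.cos_pi_div_two, neg_zero]
    · rw [show 4*Real.pi*(5/8:ℝ) = Real.pi/2 + (1:ℤ)*(2*Real.pi) by push_cast; ring,
        Real.cos_add_int_mul_two_pi, Real.cos_pi_div_two]
    · rw [show 4*Real.pi*(7/8:ℝ) = (Real.pi/2 + Real.pi) + (1:ℤ)*(2*Real.pi) by push_cast; ring,
        Real.cos_add_int_mul_two_pi, Real.cos_add_pi, Real.cos_pi_div_two, neg_zero]
  unfold sEx
  rw [hc]
  simp


lemma Ftil_P1 : EqOn Ftil (fun _ => (0:ℝ)) (Icc 0 (1/8)) := by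
  intro x ⟨h1, h2⟩
  unfold Ftil
  rw [fract_eq h1 (by linarith)]
  rw [if_neg (by push_neg; intro h; linarith), if_neg (by push_neg; intro h; linarith)]

lemma Ftil_P2 : EqOn Ftil sEx (Icc (1/8) (3/8)) := by
  intro x ⟨h1, h2⟩
  unfold Ftil
  rw [fract_eq (by linarith) (by linarith)]
  rcases eq_or_lt_of_le h1 with h | h
  · rw [if_neg (by rw [← h]; push_neg; intro h'; linarith),
      if_neg (by rw [← h]; push_neg; intro h'; linarith), ← h, sEx_vanish (by norm_num)]
  rcases eq_or_lt_of_le h2 with h' | h'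
  · rw [if_neg (by rw [h']; push_neg; intro h''; linarith),
      if_neg (by rw [h']; push_neg; intro h''; linarith), h', sEx_vanish (by norm_num)]
  · rw [if_pos ⟨h, h'⟩]

lemma Ftil_P3 : EqOn Ftil (fun _ => (0:ℝ)) (Icc (3/8) (5/8)) := by
  intro x ⟨h1, h2⟩
  unfold Ftil
  rw [fract_eq (by linarith) (by linarith)]
  rw [if_neg (by push_neg; intro h; linarith), if_neg (by push_neg; intro h; linarith)]

lemma Ftil_P4 : EqOn Ftil (fun x => -sEx x) (Icc (5/8) (7/8)) := by
  intro x ⟨h1, h2⟩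
  show Ftil x = -(sEx x)
  unfold Ftil
  rw [fract_eq (by linarith) (by linarith)]
  rcases eq_or_lt_of_le h1 with h | h
  · rw [if_neg (by rw [← h]; push_neg; intro h'; linarith),
      if_neg (by rw [← h]; push_neg; intro h'; linarith), ← h, sEx_vanish (by norm_num)]
    norm_num
  rcases eq_or_lt_of_le h2 with h' | h'
  · rw [if_neg (by rw [h']; push_neg; intro h''; linarith),
      if_neg (by rw [h']; push_neg; intro h''; linarith), h', sEx_vanish (by norm_num)]
    norm_num
  · rw [if_neg (by push_neg; intro h''; linarith), if_pos ⟨h, h'⟩]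

lemma Ftil_P5 : EqOn Ftil (fun _ => (0:ℝ)) (Icc (7/8) 1) := by
  intro x ⟨h1, h2⟩
  unfold Ftil
  rcases eq_or_lt_of_le h2 with h | h
  · rw [h]; norm_num
  rw [fract_eq (by linarith) h]
  rw [if_neg (by push_neg; intro h'; linarith), if_neg (by push_neg; intro h'; linarith)]

-- Fhat pieces
lemma Fhat_Q1 : EqOn Fhat (fun _ => (0:ℝ)) (Icc 0 (1/8)) := by
  intro x ⟨h1, h2⟩
  unfold Fhat
  rw [fract_eq h1 (by linarith)]
  rw [if_neg (by push_neg; constructor <;> intro h <;> linarith),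
    if_neg (by push_neg; constructor <;> intro h <;> linarith)]

lemma Fhat_Q2 {x : ℝ} (h1 : 1/8 ≤ x) (h2 : x ≤ 1/4) (hne : x ≠ 1/4) : Fhat x = sEx x := by
  unfold Fhat
  rw [fract_eq (by linarith) (by linarith)]
  rcases eq_or_lt_of_le h1 with h | h
  · rw [if_neg (by rw [← h]; push_neg; constructor <;> intro h' <;> linarith),
      if_neg (by rw [← h]; push_neg; constructor <;> intro h' <;> linarith),
      ← h, sEx_vanish (by norm_num)]
  · rw [if_pos (Or.inl ⟨h, lt_of_le_of_ne h2 hne⟩)]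

lemma Fhat_Q3 {x : ℝ} (h1 : 1/4 ≤ x) (h2 : x ≤ 3/8) (hne : x ≠ 1/4) : Fhat x = -sEx x := by
  unfold Fhat
  rw [fract_eq (by linarith) (by linarith)]
  have h1' : 1/4 < x := lt_of_le_of_ne h1 (Ne.symm hne)
  rcases eq_or_lt_of_le h2 with h | h
  · rw [if_neg (by rw [h]; push_neg; constructor <;> intro h' <;> linarith),
      if_neg (by rw [h]; push_neg; constructor <;> intro h' <;> linarith),
      h, sEx_vanish (by norm_num)]
    norm_num
  · rw [if_neg (by push_neg; constructor <;> intro h' <;> linarith),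
      if_pos (Or.inl ⟨h1', h⟩)]

lemma Fhat_Q4 : EqOn Fhat (fun _ => (0:ℝ)) (Icc (3/8) (5/8)) := by
  intro x ⟨h1, h2⟩
  unfold Fhat
  rw [fract_eq (by linarith) (by linarith)]
  rw [if_neg (by push_neg; constructor <;> intro h <;> linarith),
    if_neg (by push_neg; constructor <;> intro h <;> linarith)]

lemma Fhat_Q5 {x : ℝ} (h1 : 5/8 ≤ x) (h2 : x ≤ 3/4) (hne : x ≠ 3/4) : Fhat x = sEx x := by
  unfold Fhat
  rw [fract_eq (by linarith) (by linarith)]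
  rcases eq_or_lt_of_le h1 with h | h
  · rw [if_neg (by rw [← h]; push_neg; constructor <;> intro h' <;> linarith),
      if_neg (by rw [← h]; push_neg; constructor <;> intro h' <;> linarith),
      ← h, sEx_vanish (by norm_num)]
  · rw [if_pos (Or.inr ⟨h, lt_of_le_of_ne h2 hne⟩)]

lemma Fhat_Q6 {x : ℝ} (h1 : 3/4 ≤ x) (h2 : x ≤ 7/8) (hne : x ≠ 3/4) : Fhat x = -sEx x := by
  unfold Fhat
  rw [fract_eq (by linarith) (by linarith)]
  have h1' : 3/4 < x := lt_of_le_of_ne h1 (Ne.symm hne)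
  rcases eq_or_lt_of_le h2 with h | h
  · rw [if_neg (by rw [h]; push_neg; constructor <;> intro h' <;> linarith),
      if_neg (by rw [h]; push_neg; constructor <;> intro h' <;> linarith),
      h, sEx_vanish (by norm_num)]
    norm_num
  · rw [if_neg (by push_neg; constructor <;> intro h' <;> linarith),
      if_pos (Or.inr ⟨h1', h⟩)]

lemma Fhat_Q7 : EqOn Fhat (fun _ => (0:ℝ)) (Icc (7/8) 1) := by
  intro x ⟨h1, h2⟩
  unfold Fhat
  rcases eq_or_lt_of_le h2 with h | h
  · rw [h]; norm_num
  rw [fract_eq (by linarith) h]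
  rw [if_neg (by push_neg; constructor <;> intro h' <;> linarith),
    if_neg (by push_neg; constructor <;> intro h' <;> linarith)]

noncomputable def II : ℝ := ∫ x in (1/8:ℝ)..(1/4), sEx x

lemma hFt : ∀ a b : ℝ, IntervalIntegrable Ftil volume a b := intInt Ftil_meas Ftil_bd
lemma hFh : ∀ a b : ℝ, IntervalIntegrable Fhat volume a b := intInt Fhat_meas Fhat_bd
lemma hS : ∀ a b : ℝ, IntervalIntegrable sEx volume a b := fun a b =>
  sEx_cont.intervalIntegrable a b

lemma J_shift : (∫ x in (5/8:ℝ)..(7/8), sEx x) = ∫ x in (1/8:ℝ)..(3/8), sEx x := by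
  have := shift_half (1/8) (3/8); norm_num at this ⊢; exact this

lemma J_shift2 : (∫ x in (5/8:ℝ)..(3/4), sEx x) = ∫ x in (1/8:ℝ)..(1/4), sEx x := by
  have := shift_half (1/8) (1/4); norm_num at this ⊢; exact this

lemma J_shift3 : (∫ x in (3/4:ℝ)..(7/8), sEx x) = ∫ x in (1/4:ℝ)..(3/8), sEx x := by
  have := shift_half (1/4) (3/8); norm_num at this ⊢; exact this

lemma J_mid : (∫ x in (1/8:ℝ)..(3/8), sEx x) = 2 * II := by
  rw [← integral_add_adjacent_intervals (hS (1/8) (1/4)) (hS (1/4) (3/8)), refl_int]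
  unfold II; ring

lemma cg {F : ℝ → ℝ} {g : ℝ → ℝ} {a b : ℝ} (hab : a ≤ b) (h : EqOn F g (Icc a b)) :
    (∫ x in a..b, F x) = ∫ x in a..b, g x :=
  integral_congr (by rwa [uIcc_of_le hab])

lemma int_Ftil_038 : (∫ x in (0:ℝ)..(3/8), Ftil x) = 2 * II := by
  rw [← integral_add_adjacent_intervals (hFt 0 (1/8)) (hFt (1/8) (3/8)),
    cg (by norm_num) Ftil_P1, cg (by norm_num) Ftil_P2, J_mid]
  simp

lemma int_Ftil_01 : (∫ x in (0:ℝ)..1, Ftil x) = 0 := by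
  rw [← integral_add_adjacent_intervals (hFt 0 (1/8)) (hFt (1/8) 1),
    ← integral_add_adjacent_intervals (hFt (1/8) (3/8)) (hFt (3/8) 1),
    ← integral_add_adjacent_intervals (hFt (3/8) (5/8)) (hFt (5/8) 1),
    ← integral_add_adjacent_intervals (hFt (5/8) (7/8)) (hFt (7/8) 1),
    cg (by norm_num) Ftil_P1, cg (by norm_num) Ftil_P2, cg (by norm_num) Ftil_P3,
    cg (by norm_num) Ftil_P4, cg (by norm_num) Ftil_P5, intervalIntegral.integral_neg, J_shift]
  simp

-- a.e. congruence for Fhat pieces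
lemma ae_ne (c : ℝ) : ∀ᵐ x ∂(volume : Measure ℝ), x ≠ c := by
  simpa using MeasureTheory.measure_eq_zero_iff_ae_notMem.mp (measure_singleton c)

lemma cg_ae {F : ℝ → ℝ} {g : ℝ → ℝ} {a b : ℝ} (hab : a ≤ b) (c : ℝ)
    (h : ∀ x ∈ Icc a b, x ≠ c → F x = g x) :
    (∫ x in a..b, F x) = ∫ x in a..b, g x := by
  apply intervalIntegral.integral_congr_ae
  filter_upwards [ae_ne c] with x hx hmem
  rw [uIoc_of_le hab] at hmem
  exact h x ⟨le_of_lt hmem.1, hmem.2⟩ hx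

lemma int_Fhat_038 : (∫ x in (0:ℝ)..(3/8), Fhat x) = 0 := by
  rw [← integral_add_adjacent_intervals (hFh 0 (1/8)) (hFh (1/8) (3/8)),
    ← integral_add_adjacent_intervals (hFh (1/8) (1/4)) (hFh (1/4) (3/8)),
    cg (by norm_num) Fhat_Q1,
    cg_ae (by norm_num) (1/4) (fun x hx hne => Fhat_Q2 hx.1 hx.2 hne),
    cg_ae (by norm_num) (1/4) (fun x hx hne => Fhat_Q3 hx.1 hx.2 hne),
    intervalIntegral.integral_neg, refl_int]
  simp

lemma int_Fhat_01 : (∫ x in (0:ℝ)..1, Fhat x) = 0 := by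
  rw [← integral_add_adjacent_intervals (hFh 0 (3/8)) (hFh (3/8) 1),
    ← integral_add_adjacent_intervals (hFh (3/8) (5/8)) (hFh (5/8) 1),
    ← integral_add_adjacent_intervals (hFh (5/8) (3/4)) (hFh (3/4) 1),
    ← integral_add_adjacent_intervals (hFh (3/4) (7/8)) (hFh (7/8) 1),
    int_Fhat_038, cg (by norm_num) Fhat_Q4,
    cg_ae (by norm_num) (3/4) (fun x hx hne => Fhat_Q5 hx.1 hx.2 hne),
    cg_ae (by norm_num) (3/4) (fun x hx hne => Fhat_Q6 hx.1 hx.2 hne),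
    cg (by norm_num) Fhat_Q7, intervalIntegral.integral_neg, J_shift2, J_shift3, refl_int]
  simp

lemma II_pos : 0 < II := by
  apply intervalIntegral_pos_of_pos_on (hS (1/8) (1/4)) _ (by norm_num)
  intro x hx
  unfold sEx
  apply Real.sqrt_pos.2
  have hc : Real.cos (4 * Real.pi * x) < 0 := cos_neg_mid hx.1 (by linarith [hx.2])
  have : 0 < -(Real.pi * Real.cos (4 * Real.pi * x)) := by nlinarith [Real.pi_pos]
  rw [max_eq_left this.le]; linarith


lemma mEx_cont : Continuous mEx := by
  unfold mEx
  exact (continuous_const.mul (Real.continuous_cos.comp (by continuity))).max continuous_const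

lemma hM : ∀ a b : ℝ, IntervalIntegrable mEx volume a b := fun a b =>
  mEx_cont.intervalIntegrable a b

lemma cos_shift1 (x : ℝ) :
    Real.cos (4 * Real.pi * x) = Real.cos (4 * Real.pi * x - 2 * Real.pi) := by
  conv_lhs => rw [show 4*Real.pi*x = (4*Real.pi*x - 2*Real.pi) + (1:ℤ)*(2*Real.pi) by
    push_cast; ring]
  rw [Real.cos_add_int_mul_two_pi]

lemma cos_shift2 (x : ℝ) :
    Real.cos (4 * Real.pi * x) = Real.cos (4 * Real.pi * x - 4 * Real.pi) := by
  conv_lhs => rw [show 4*Real.pi*x = (4*Real.pi*x - 4*Real.pi) + (2:ℤ)*(2*Real.pi) by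
    push_cast; ring]
  rw [Real.cos_add_int_mul_two_pi]

lemma mEx_M1 : EqOn mEx (fun x => Real.pi * Real.cos (4 * Real.pi * x)) (Icc 0 (1/8)) := by
  intro x ⟨h1, h2⟩
  apply max_eq_left
  have : 0 ≤ Real.cos (4 * Real.pi * x) :=
    Real.cos_nonneg_of_mem_Icc ⟨by nlinarith [Real.pi_pos], by nlinarith [Real.pi_pos]⟩
  nlinarith [Real.pi_pos]

lemma mEx_M2 : EqOn mEx (fun _ => (0:ℝ)) (Icc (1/8) (3/8)) := by
  intro x ⟨h1, h2⟩
  apply max_eq_right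
  have : Real.cos (4 * Real.pi * x) ≤ 0 :=
    Real.cos_nonpos_of_pi_div_two_le_of_le (by nlinarith [Real.pi_pos]) (by nlinarith [Real.pi_pos])
  nlinarith [Real.pi_pos]

lemma mEx_M3 : EqOn mEx (fun x => Real.pi * Real.cos (4 * Real.pi * x)) (Icc (3/8) (5/8)) := by
  intro x ⟨h1, h2⟩
  apply max_eq_left
  have : 0 ≤ Real.cos (4 * Real.pi * x) := by
    rw [cos_shift1]
    exact Real.cos_nonneg_of_mem_Icc ⟨by nlinarith [Real.pi_pos], by nlinarith [Real.pi_pos]⟩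
  nlinarith [Real.pi_pos]

lemma mEx_M4 : EqOn mEx (fun _ => (0:ℝ)) (Icc (5/8) (7/8)) := by
  intro x ⟨h1, h2⟩
  apply max_eq_right
  have : Real.cos (4 * Real.pi * x) ≤ 0 := by
    rw [cos_shift1]
    exact Real.cos_nonpos_of_pi_div_two_le_of_le (by nlinarith [Real.pi_pos])
      (by nlinarith [Real.pi_pos])
  nlinarith [Real.pi_pos]

lemma mEx_M5 : EqOn mEx (fun x => Real.pi * Real.cos (4 * Real.pi * x)) (Icc (7/8) 1) := by
  intro x ⟨h1, h2⟩
  apply max_eq_left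
  have : 0 ≤ Real.cos (4 * Real.pi * x) := by
    rw [cos_shift2]
    exact Real.cos_nonneg_of_mem_Icc ⟨by nlinarith [Real.pi_pos], by nlinarith [Real.pi_pos]⟩
  nlinarith [Real.pi_pos]

lemma int_picos (a b : ℝ) : (∫ x in a..b, Real.pi * Real.cos (4 * Real.pi * x))
    = Real.sin (4 * Real.pi * b) / 4 - Real.sin (4 * Real.pi * a) / 4 := by
  refine intervalIntegral.integral_eq_sub_of_hasDerivAt
    (f := fun x => Real.sin (4 * Real.pi * x) / 4) (fun x _ => ?_) ?_
  · have h1 : HasDerivAt (fun y : ℝ => 4 * Real.pi * y) (4 * Real.pi) x := by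
      simpa using (hasDerivAt_id x).const_mul (4 * Real.pi)
    have h3 := ((Real.hasDerivAt_sin (4 * Real.pi * x)).comp x h1).div_const 4
    rw [show Real.pi * Real.cos (4 * Real.pi * x) = Real.cos (4 * Real.pi * x) * (4 * Real.pi) / 4 by ring]
    exact h3
  · exact (continuous_const.mul (Real.continuous_cos.comp (by continuity))).intervalIntegrable a b

lemma sin18 : Real.sin (4 * Real.pi * (1/8:ℝ)) = 1 := by
  rw [show 4*Real.pi*(1/8:ℝ) = Real.pi/2 by ring, Real.sin_pi_div_two]

lemma sin38 : Real.sin (4 * Real.pi * (3/8:ℝ)) = -1 := by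
  rw [show 4*Real.pi*(3/8:ℝ) = Real.pi/2 + Real.pi by ring, Real.sin_add_pi,
    Real.sin_pi_div_two]

lemma sin58 : Real.sin (4 * Real.pi * (5/8:ℝ)) = 1 := by
  rw [show 4*Real.pi*(5/8:ℝ) = Real.pi/2 + (1:ℤ)*(2*Real.pi) by push_cast; ring,
    Real.sin_add_int_mul_two_pi, Real.sin_pi_div_two]

lemma sin78 : Real.sin (4 * Real.pi * (7/8:ℝ)) = -1 := by
  rw [show 4*Real.pi*(7/8:ℝ) = (Real.pi/2 + Real.pi) + (1:ℤ)*(2*Real.pi) by push_cast; ring,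
    Real.sin_add_int_mul_two_pi, Real.sin_add_pi, Real.sin_pi_div_two]

lemma sin1 : Real.sin (4 * Real.pi * (1:ℝ)) = 0 := by
  rw [show 4*Real.pi*(1:ℝ) = 0 + (2:ℤ)*(2*Real.pi) by push_cast; ring,
    Real.sin_add_int_mul_two_pi, Real.sin_zero]

lemma int_mEx : (∫ x in Icc (0:ℝ) 1, mEx x) = 1 := by
  rw [MeasureTheory.integral_Icc_eq_integral_Ioc,
    ← intervalIntegral.integral_of_le (by norm_num : (0:ℝ) ≤ 1)]
  rw [← integral_add_adjacent_intervals (hM 0 (1/8)) (hM (1/8) 1),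
    ← integral_add_adjacent_intervals (hM (1/8) (3/8)) (hM (3/8) 1),
    ← integral_add_adjacent_intervals (hM (3/8) (5/8)) (hM (5/8) 1),
    ← integral_add_adjacent_intervals (hM (5/8) (7/8)) (hM (7/8) 1),
    cg (by norm_num) mEx_M1, cg (by norm_num) mEx_M2, cg (by norm_num) mEx_M3,
    cg (by norm_num) mEx_M4, cg (by norm_num) mEx_M5,
    int_picos, int_picos, int_picos, sin18, sin38, sin58, sin78, sin1]
  norm_num

-- bad set
def badS : Set ℝ := {0, 1/8, 1/4, 3/8, 5/8, 3/4, 7/8}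

lemma B_countable : (Int.fract ⁻¹' badS : Set ℝ).Countable := by
  have hsub : (Int.fract ⁻¹' badS : Set ℝ) ⊆ ⋃ (n : ℤ), (fun c => c + (n:ℝ)) '' badS := by
    intro x hx
    refine mem_iUnion.2 ⟨⌊x⌋, ⟨Int.fract x, hx, ?_⟩⟩
    rw [← Int.self_sub_floor]; ring
  have hfin : badS.Finite := by
    unfold badS
    exact (((((((Set.finite_singleton _).insert _).insert _).insert _).insert _).insert _).insert _)
  exact Set.Countable.mono hsub (countable_iUnion (fun n => (hfin.image _).countable))

lemma ae_good : ∀ᵐ x ∂(volume : Measure ℝ), Int.fract x ∉ badS :=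
  MeasureTheory.measure_eq_zero_iff_ae_notMem.mp (B_countable.measure_zero volume)

lemma eventually_fract {x : ℝ} (hx : Int.fract x ≠ 0) :
    ∀ᶠ y in nhds x, Int.fract y = y - (⌊x⌋ : ℝ) := by
  have hd : Int.fract x = x - (⌊x⌋:ℝ) := (Int.self_sub_floor x).symm
  have hlt : (⌊x⌋:ℝ) < x := by
    rcases eq_or_lt_of_le (Int.fract_nonneg x) with h | h
    · exact absurd h.symm hx
    · linarith [hd ▸ h]
  filter_upwards [isOpen_Ioo.mem_nhds
    (show x ∈ Ioo ((⌊x⌋:ℝ)) ((⌊x⌋:ℝ) + 1) from ⟨hlt, by exact_mod_cast Int.lt_floor_add_one x⟩)]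
    with y hy
  have hfl : ⌊y⌋ = ⌊x⌋ := Int.floor_eq_iff.2 ⟨hy.1.le, by exact_mod_cast hy.2⟩
  rw [← Int.self_sub_floor, hfl]

lemma eventually_Ioo {x a b : ℝ} (hx : Int.fract x ≠ 0)
    (h1 : a < Int.fract x) (h2 : Int.fract x < b) :
    ∀ᶠ y in nhds x, a < Int.fract y ∧ Int.fract y < b := by
  have hd : Int.fract x = x - (⌊x⌋:ℝ) := (Int.self_sub_floor x).symm
  filter_upwards [eventually_fract hx, isOpen_Ioo.mem_nhds
    (show x ∈ Ioo ((⌊x⌋:ℝ) + a) ((⌊x⌋:ℝ) + b) from ⟨by linarith [hd ▸ h1], by linarith [hd ▸ h2]⟩)]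
    with y h h'
  rw [h]
  exact ⟨by linarith [h'.1], by linarith [h'.2]⟩

lemma contAt_of_eventually {F g : ℝ → ℝ} {x : ℝ} (hg : Continuous g)
    (h : ∀ᶠ y in nhds x, F y = g y) : ContinuousAt F x :=
  hg.continuousAt.congr (Filter.eventuallyEq_comm.mp h)

lemma notS {x : ℝ} (hx : Int.fract x ∉ badS) :
    Int.fract x ≠ 0 ∧ Int.fract x ≠ 1/8 ∧ Int.fract x ≠ 1/4 ∧ Int.fract x ≠ 3/8 ∧
    Int.fract x ≠ 5/8 ∧ Int.fract x ≠ 3/4 ∧ Int.fract x ≠ 7/8 := by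
  simp only [badS, mem_insert_iff, mem_singleton_iff] at hx
  push_neg at hx
  exact hx

lemma contAt_Ftil {x : ℝ} (hx : Int.fract x ∉ badS) : ContinuousAt Ftil x := by
  obtain ⟨e0, e18, e14, e38, e58, e34, e78⟩ := notS hx
  have hc0 : 0 < Int.fract x := lt_of_le_of_ne (Int.fract_nonneg x) (Ne.symm e0)
  have hc1 : Int.fract x < 1 := Int.fract_lt_one x
  by_cases hA : 1/8 < Int.fract x ∧ Int.fract x < 3/8
  · refine contAt_of_eventually sEx_cont ?_
    filter_upwards [eventually_Ioo e0 hA.1 hA.2] with y hy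
    unfold Ftil; rw [if_pos hy]
  by_cases hB : 5/8 < Int.fract x ∧ Int.fract x < 7/8
  · refine contAt_of_eventually sEx_cont.neg ?_
    filter_upwards [eventually_Ioo e0 hB.1 hB.2] with y hy
    show Ftil y = -sEx y
    unfold Ftil; rw [if_neg (by push_neg; intro h; linarith [hy.1]), if_pos hy]
  push_neg at hA hB
  refine contAt_of_eventually (g := fun _ => (0:ℝ)) continuous_const ?_
  rcases lt_trichotomy (Int.fract x) (1/8) with h | h | h
  · filter_upwards [eventually_Ioo e0 hc0 h] with y hy
    show Ftil y = 0
    unfold Ftil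
    rw [if_neg (by push_neg; intro h'; linarith [hy.2]),
      if_neg (by push_neg; intro h'; linarith [hy.2])]
  · exact absurd h e18
  · have h38 : 3/8 < Int.fract x := lt_of_le_of_ne (hA h) (Ne.symm e38)
    rcases lt_trichotomy (Int.fract x) (5/8) with h' | h' | h'
    · filter_upwards [eventually_Ioo e0 h38 h'] with y hy
      show Ftil y = 0
      unfold Ftil
      rw [if_neg (by push_neg; intro h''; linarith [hy.1]),
        if_neg (by push_neg; intro h''; linarith [hy.2])]
    · exact absurd h' e58
    · have h78 : 7/8 < Int.fract x := lt_of_le_of_ne (hB h') (Ne.symm e78)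
      filter_upwards [eventually_Ioo e0 h78 hc1] with y hy
      show Ftil y = 0
      unfold Ftil
      rw [if_neg (by push_neg; intro h''; linarith [hy.1]),
        if_neg (by push_neg; intro h''; linarith [hy.1])]

lemma contAt_Fhat {x : ℝ} (hx : Int.fract x ∉ badS) : ContinuousAt Fhat x := by
  obtain ⟨e0, e18, e14, e38, e58, e34, e78⟩ := notS hx
  have hc0 : 0 < Int.fract x := lt_of_le_of_ne (Int.fract_nonneg x) (Ne.symm e0)
  have hc1 : Int.fract x < 1 := Int.fract_lt_one x
  by_cases hA1 : 1/8 < Int.fract x ∧ Int.fract x < 1/4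
  · refine contAt_of_eventually sEx_cont ?_
    filter_upwards [eventually_Ioo e0 hA1.1 hA1.2] with y hy
    unfold Fhat; rw [if_pos (Or.inl hy)]
  by_cases hA2 : 5/8 < Int.fract x ∧ Int.fract x < 3/4
  · refine contAt_of_eventually sEx_cont ?_
    filter_upwards [eventually_Ioo e0 hA2.1 hA2.2] with y hy
    unfold Fhat; rw [if_pos (Or.inr hy)]
  by_cases hB1 : 1/4 < Int.fract x ∧ Int.fract x < 3/8
  · refine contAt_of_eventually sEx_cont.neg ?_
    filter_upwards [eventually_Ioo e0 hB1.1 hB1.2] with y hy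
    show Fhat y = -sEx y
    unfold Fhat
    rw [if_neg (by push_neg; constructor <;> intro h' <;> [linarith [hy.1]; linarith [hy.2]]),
      if_pos (Or.inl hy)]
  by_cases hB2 : 3/4 < Int.fract x ∧ Int.fract x < 7/8
  · refine contAt_of_eventually sEx_cont.neg ?_
    filter_upwards [eventually_Ioo e0 hB2.1 hB2.2] with y hy
    show Fhat y = -sEx y
    unfold Fhat
    rw [if_neg (by push_neg; constructor <;> intro h' <;> [linarith [hy.1]; linarith [hy.1]]),
      if_pos (Or.inr hy)]
  push_neg at hA1 hA2 hB1 hB2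
  refine contAt_of_eventually (g := fun _ => (0:ℝ)) continuous_const ?_
  rcases lt_trichotomy (Int.fract x) (1/8) with h | h | h
  · filter_upwards [eventually_Ioo e0 hc0 h] with y hy
    show Fhat y = 0
    unfold Fhat
    rw [if_neg (by push_neg; constructor <;> intro h' <;> linarith [hy.2]),
      if_neg (by push_neg; constructor <;> intro h' <;> linarith [hy.2])]
  · exact absurd h e18
  · have h14 : 1/4 < Int.fract x := lt_of_le_of_ne (hA1 h) (Ne.symm e14)
    have h38 : 3/8 < Int.fract x := lt_of_le_of_ne (hB1 h14) (Ne.symm e38)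
    rcases lt_trichotomy (Int.fract x) (5/8) with h' | h' | h'
    · filter_upwards [eventually_Ioo e0 h38 h'] with y hy
      show Fhat y = 0
      unfold Fhat
      rw [if_neg (by push_neg; constructor <;> intro h'' <;>
          [linarith [hy.1]; linarith [hy.2]]),
        if_neg (by push_neg; constructor <;> intro h'' <;>
          [linarith [hy.1]; linarith [hy.2]])]
    · exact absurd h' e58
    · have h34 : 3/4 < Int.fract x := lt_of_le_of_ne (hA2 h') (Ne.symm e34)
      have h78 : 7/8 < Int.fract x := lt_of_le_of_ne (hB2 h34) (Ne.symm e78)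
      filter_upwards [eventually_Ioo e0 h78 hc1] with y hy
      show Fhat y = 0
      unfold Fhat
      rw [if_neg (by push_neg; constructor <;> intro h'' <;> linarith [hy.1]),
        if_neg (by push_neg; constructor <;> intro h'' <;> linarith [hy.1])]

-- the solutions
noncomputable def uu (F : ℝ → ℝ) (x : ℝ) : ℝ := ∫ t in (0:ℝ)..x, F t

lemma uu_lip {F : ℝ → ℝ} (hi : ∀ a b : ℝ, IntervalIntegrable F volume a b)
    (hb : ∀ x, ‖F x‖ ≤ Real.sqrt (2 * Real.pi)) :
    LipschitzWith (Real.sqrt (2 * Real.pi)).toNNReal (uu F) := by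
  apply LipschitzWith.of_dist_le_mul
  intro x y
  rw [Real.dist_eq, Real.dist_eq]
  have h1 : uu F x - uu F y = ∫ t in y..x, F t := integral_interval_sub_left (hi 0 x) (hi 0 y)
  rw [h1]
  have h2 := intervalIntegral.norm_integral_le_of_norm_le_const
    (C := Real.sqrt (2 * Real.pi)) (a := y) (b := x) (f := F) (fun z _ => hb z)
  rw [Real.norm_eq_abs] at h2
  rw [Real.coe_toNNReal _ (Real.sqrt_nonneg _)]; exact h2

lemma uu_per {F : ℝ → ℝ} (hi : ∀ a b : ℝ, IntervalIntegrable F volume a b)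
    (hp : Function.Periodic F 1) (h0 : (∫ t in (0:ℝ)..1, F t) = 0) :
    Function.Periodic (uu F) 1 := by
  intro x
  have h1 : uu F x + (∫ t in x..(x+1), F t) = uu F (x + 1) :=
    integral_add_adjacent_intervals (hi 0 x) (hi x (x+1))
  have h2 := hp.intervalIntegral_add_eq x 0
  simp only [zero_add] at h2
  rw [← h1, h2, h0, add_zero]

lemma uu_zero (F : ℝ → ℝ) : uu F 0 = 0 := integral_same

lemma deriv_ae_til : ∀ᵐ x ∂(volume : Measure ℝ), HasDerivAt (uu Ftil) (Ftil x) x := by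
  filter_upwards [ae_good] with x hx
  exact intervalIntegral.integral_hasDerivAt_right (hFt 0 x)
    Ftil_meas.stronglyMeasurable.stronglyMeasurableAtFilter (contAt_Ftil hx)

lemma deriv_ae_hat : ∀ᵐ x ∂(volume : Measure ℝ), HasDerivAt (uu Fhat) (Fhat x) x := by
  filter_upwards [ae_good] with x hx
  exact intervalIntegral.integral_hasDerivAt_right (hFh 0 x)
    Fhat_meas.stronglyMeasurable.stronglyMeasurableAtFilter (contAt_Fhat hx)


theorem stmt18 :
    ∃ utld uhat : ℝ → ℝ,
      (∃ K : NNReal, LipschitzWith K utld) ∧ Function.Periodic utld 1 ∧ utld 0 = 0 ∧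
      (∀ᵐ x ∂(volume : Measure ℝ), HasDerivAt utld (Ftil x) x) ∧
      (∃ K : NNReal, LipschitzWith K uhat) ∧ Function.Periodic uhat 1 ∧ uhat 0 = 0 ∧
      (∀ᵐ x ∂(volume : Measure ℝ), HasDerivAt uhat (Fhat x) x) ∧
      (∀ x, 0 ≤ mEx x) ∧ (∫ x in Icc (0 : ℝ) 1, mEx x) = 1 ∧
      (∀ᵐ x ∂(volume : Measure ℝ), x ∈ Icc (0 : ℝ) 1 →
        (1 / 2) * deriv utld x ^ 2 + Real.pi * Real.cos (4 * Real.pi * x) = mEx x ∧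
        mEx x * deriv utld x = 0) ∧
      (∀ᵐ x ∂(volume : Measure ℝ), x ∈ Icc (0 : ℝ) 1 →
        (1 / 2) * deriv uhat x ^ 2 + Real.pi * Real.cos (4 * Real.pi * x) = mEx x ∧
        mEx x * deriv uhat x = 0) ∧
      ¬ (∃ c : ℝ, ∀ᵐ x ∂(volume : Measure ℝ), utld x - uhat x = c) := by
  refine ⟨uu Ftil, uu Fhat,
    ⟨_, uu_lip hFt Ftil_bd⟩, uu_per hFt Ftil_per int_Ftil_01, uu_zero _, deriv_ae_til,
    ⟨_, uu_lip hFh Fhat_bd⟩, uu_per hFh Fhat_per int_Fhat_01, uu_zero _, deriv_ae_hat,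
    fun x => le_max_right _ _, int_mEx, ?_, ?_, ?_⟩
  · filter_upwards [deriv_ae_til] with x hd _
    rw [hd.deriv]
    exact pde_til x
  · filter_upwards [deriv_ae_hat, ae_good] with x hd hg _
    rw [hd.deriv]
    obtain ⟨e0, e18, e14, e38, e58, e34, e78⟩ := notS hg
    exact pde_hat x e14 e34
  · rintro ⟨c, hc⟩
    have hcont : Continuous (fun x => uu Ftil x - uu Fhat x) :=
      ((uu_lip hFt Ftil_bd).continuous).sub ((uu_lip hFh Fhat_bd).continuous)
    have heq : (fun x => uu Ftil x - uu Fhat x) = fun _ => c :=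
      (hcont.ae_eq_iff_eq volume continuous_const).mp hc
    have h0 : uu Ftil 0 - uu Fhat 0 = c := congrFun heq 0
    have h38 : uu Ftil (3/8) - uu Fhat (3/8) = c := congrFun heq (3/8)
    rw [uu_zero, uu_zero] at h0
    have hv : uu Ftil (3/8) - uu Fhat (3/8) = 2 * II := by
      show (∫ t in (0:ℝ)..(3/8), Ftil t) - (∫ t in (0:ℝ)..(3/8), Fhat t) = 2 * II
      rw [int_Ftil_038, int_Fhat_038]; ring
    rw [hv, ← h0] at h38
    linarith [II_pos]
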